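/- Let $M=\{M_1,\dots,M_k\}$ be a measurement on $\mathbb{C}^D$ and suppose $N_1,\dots,N_k$ are matrices such that $\sum_{i=1}^k N_i^\dagger N_i \le I$, each $N_i$ is Hilbert-Schmidt orthogonal to $M_i - N_i$, and $\sum_{i=1}^k \|N_i\|_F^2 \ge D(1-\delta^2)$ for some $0<\delta<1$. Define $N_{k+1} = \sqrt{I - \sum_{i=1}^k N_i^\dagger N_i}$. Then $N = \{N_1,\dots,N_k,N_{k+1}\}$ is a measurement and $\Delta(M,N) \le \delta$, where $\Delta(M,N)^2 = \sum_i \Delta(M_i,N_i)^2 + \Delta(0, N_{k+1})^2$ with $\Delta(A,B)^2 \le \frac{1}{2D}\|A-B\|_F^2$. -/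

import Mathlib

open Matrix

/-- The phase-invariant normalized Frobenius distance between two square complex
matrices, `Δ(A,B) = inf_{θ ∈ [0,2π)} (1/√(2D)) ‖A - e^{iθ} B‖_F`, where `D` is the
dimension of the underlying space. -/
noncomputable def Delta {n : Type*} [Fintype n] (A B : Matrix n n ℂ) : ℝ :=
  sInf {x : ℝ | ∃ θ ∈ Set.Ico (0 : ℝ) (2 * Real.pi),
    x = (1 / Real.sqrt (2 * Fintype.card n)) *
      Real.sqrt (((A - Complex.exp (θ * Complex.I) • B)ᴴ *
        (A - Complex.exp (θ * Complex.I) • B)).trace.re)}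

open ComplexOrder in
noncomputable def Matrix.PosSemidef.sqrt {n 𝕜 : Type*} [Fintype n] [DecidableEq n] [RCLike 𝕜]
    {A : Matrix n n 𝕜} (hA : A.PosSemidef) : Matrix n n 𝕜 :=
  hA.1.eigenvectorUnitary.1 * diagonal ((↑) ∘ (√·) ∘ hA.1.eigenvalues) *
  (star hA.1.eigenvectorUnitary : Matrix n n 𝕜)

open ComplexOrder in
lemma Matrix.PosSemidef.posSemidef_sqrt {n 𝕜 : Type*} [Fintype n] [DecidableEq n] [RCLike 𝕜]
    {A : Matrix n n 𝕜} (hA : A.PosSemidef) : hA.sqrt.PosSemidef := by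
  unfold Matrix.PosSemidef.sqrt
  have hd : (diagonal ((↑) ∘ (√·) ∘ hA.1.eigenvalues : n → 𝕜)).PosSemidef :=
    posSemidef_diagonal_iff.mpr fun i => by simp [RCLike.ofReal_nonneg]
  simpa [Matrix.star_eq_conjTranspose] using
    hd.mul_mul_conjTranspose_same (hA.1.eigenvectorUnitary : Matrix n n 𝕜)

open ComplexOrder in
lemma Matrix.PosSemidef.sqrt_mul_self {n 𝕜 : Type*} [Fintype n] [DecidableEq n] [RCLike 𝕜]
    {A : Matrix n n 𝕜} (hA : A.PosSemidef) : hA.sqrt * hA.sqrt = A := by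
  unfold Matrix.PosSemidef.sqrt
  have hU : (star hA.1.eigenvectorUnitary : Matrix n n 𝕜) * hA.1.eigenvectorUnitary.1 = 1 :=
    Unitary.coe_star_mul_self _
  have hDD : diagonal ((↑) ∘ (√·) ∘ hA.1.eigenvalues : n → 𝕜) *
      diagonal ((↑) ∘ (√·) ∘ hA.1.eigenvalues) = diagonal (RCLike.ofReal ∘ hA.1.eigenvalues) := by
    rw [diagonal_mul_diagonal]; congr 1; funext i
    simp only [Function.comp_apply, ← RCLike.ofReal_mul, Real.mul_self_sqrt (hA.eigenvalues_nonneg i)]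
  conv_rhs => rw [hA.1.spectral_theorem, Unitary.conjStarAlgAut_apply]
  calc _ = hA.1.eigenvectorUnitary.1 * diagonal ((↑) ∘ (√·) ∘ hA.1.eigenvalues : n → 𝕜) *
      ((star hA.1.eigenvectorUnitary : Matrix n n 𝕜) * hA.1.eigenvectorUnitary.1) *
      diagonal ((↑) ∘ (√·) ∘ hA.1.eigenvalues) * (star hA.1.eigenvectorUnitary : Matrix n n 𝕜) := by
        simp only [Matrix.mul_assoc]
    _ = _ := by rw [hU, Matrix.mul_one, Matrix.mul_assoc _ (diagonal _) (diagonal _), hDD]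

open Matrix

lemma tr_re_nonneg {n : Type*} [Fintype n] (X : Matrix n n ℂ) :
    0 ≤ (Xᴴ * X).trace.re := by
  simp only [Matrix.trace, Matrix.diag, Matrix.mul_apply, Matrix.conjTranspose_apply,
    Complex.re_sum]
  apply Finset.sum_nonneg; intro i _
  apply Finset.sum_nonneg; intro j _
  simpa [Complex.normSq_apply] using (Complex.normSq_nonneg (X j i))

lemma Delta_nonneg {n : Type*} [Fintype n] (A B : Matrix n n ℂ) : 0 ≤ Delta A B := by
  apply Real.sInf_nonneg
  rintro x ⟨θ, hθ, rfl⟩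
  positivity

lemma Delta_le {n : Type*} [Fintype n] (A B : Matrix n n ℂ) :
    Delta A B ≤ (1 / Real.sqrt (2 * Fintype.card n)) *
      Real.sqrt (((A - B)ᴴ * (A - B)).trace.re) := by
  apply csInf_le
  · exact ⟨0, by rintro x ⟨θ, hθ, rfl⟩; positivity⟩
  · exact ⟨0, ⟨le_refl 0, by positivity⟩, by norm_num⟩
open ComplexOrder in
theorem stmt_15 (D k : ℕ) (hD : 0 < D) (δ : ℝ) (hδ0 : 0 < δ) (hδ1 : δ < 1)
    (M N : Fin k → Matrix (Fin D) (Fin D) ℂ)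
    (hM : ∑ i, (M i)ᴴ * M i = 1)
    (hpsd : ((1 : Matrix (Fin D) (Fin D) ℂ) - ∑ i, (N i)ᴴ * N i).PosSemidef)
    (horth : ∀ i, ((N i)ᴴ * (M i - N i)).trace = 0)
    (hnorm : (D : ℝ) * (1 - δ ^ 2) ≤ ∑ i, ((N i)ᴴ * N i).trace.re) :
    (hpsd.sqrtᴴ * hpsd.sqrt + ∑ i, (N i)ᴴ * N i = 1) ∧
    Real.sqrt (∑ i, (Delta (M i) (N i)) ^ 2 + (Delta 0 hpsd.sqrt) ^ 2) ≤ δ := by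
  have hherm : hpsd.sqrtᴴ = hpsd.sqrt := hpsd.posSemidef_sqrt.isHermitian
  have hsq : hpsd.sqrtᴴ * hpsd.sqrt = 1 - ∑ i, (N i)ᴴ * N i := by
    rw [hherm, hpsd.sqrt_mul_self]
  have part1 : hpsd.sqrtᴴ * hpsd.sqrt + ∑ i, (N i)ᴴ * N i = 1 := by
    rw [hsq, sub_add_cancel]
  refine ⟨part1, ?_⟩
  -- basic positivity
  have hDpos : (0:ℝ) < (D:ℝ) := by exact_mod_cast hD
  have h2D : (0:ℝ) < 2 * D := by linarith
  have hcard : (Fintype.card (Fin D) : ℝ) = (D : ℝ) := by simp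
  -- squared Delta bound
  have key : ∀ A B : Matrix (Fin D) (Fin D) ℂ,
      Delta A B ^ 2 ≤ (1 / (2 * D)) * ((A - B)ᴴ * (A - B)).trace.re := by
    intro A B
    have h1 := Delta_le A B
    have h0 := Delta_nonneg A B
    have ht := tr_re_nonneg (A - B)
    calc Delta A B ^ 2 ≤ ((1 / Real.sqrt (2 * Fintype.card (Fin D))) *
        Real.sqrt (((A - B)ᴴ * (A - B)).trace.re)) ^ 2 := by
          apply pow_le_pow_left₀ h0 h1
      _ = (1 / (2 * D)) * ((A - B)ᴴ * (A - B)).trace.re := by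
          rw [mul_pow, div_pow, one_pow, Real.sq_sqrt (by rw [hcard]; linarith),
            Real.sq_sqrt ht, hcard]
  -- trace identity per i
  have htr : ∀ i, (((M i - N i)ᴴ * (M i - N i)).trace : ℂ)
      = ((M i)ᴴ * M i).trace - ((N i)ᴴ * N i).trace := by
    intro i
    have hNN : star (((N i)ᴴ * N i).trace) = ((N i)ᴴ * N i).trace := by
      conv_rhs => rw [show (N i)ᴴ * N i = ((N i)ᴴ * N i)ᴴ by simp [Matrix.conjTranspose_mul]]
      rw [Matrix.trace_conjTranspose]
    have hNM : ((N i)ᴴ * M i).trace = ((N i)ᴴ * N i).trace := by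
      have := horth i
      rw [Matrix.mul_sub, Matrix.trace_sub, sub_eq_zero] at this
      exact this
    have hMN : ((M i)ᴴ * N i).trace = ((N i)ᴴ * N i).trace := by
      have : ((M i)ᴴ * N i) = ((N i)ᴴ * M i)ᴴ := by simp [Matrix.conjTranspose_mul]
      rw [this, Matrix.trace_conjTranspose, hNM, hNN]
    have expand : (M i - N i)ᴴ * (M i - N i)
        = (M i)ᴴ * M i - (M i)ᴴ * N i - (N i)ᴴ * M i + (N i)ᴴ * N i := by
      simp only [Matrix.conjTranspose_sub, Matrix.sub_mul, Matrix.mul_sub]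
      noncomm_ring
    rw [expand, Matrix.trace_add, Matrix.trace_sub, Matrix.trace_sub, hMN, hNM]
    ring
  set S : ℝ := ∑ i, ((N i)ᴴ * N i).trace.re with hS
  -- sum of M traces
  have hMtr : ∑ i, ((M i)ᴴ * M i).trace.re = (D : ℝ) := by
    have : (∑ i, ((M i)ᴴ * M i).trace) = (D : ℂ) := by
      rw [← Matrix.trace_sum, hM, Matrix.trace_one]; simp
    calc ∑ i, ((M i)ᴴ * M i).trace.re = (∑ i, ((M i)ᴴ * M i).trace).re := by
          rw [Complex.re_sum]
      _ = (D : ℝ) := by rw [this]; simp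
  have hsum1 : ∑ i, ((M i - N i)ᴴ * (M i - N i)).trace.re = (D : ℝ) - S := by
    calc ∑ i, ((M i - N i)ᴴ * (M i - N i)).trace.re
        = ∑ i, (((M i)ᴴ * M i).trace.re - ((N i)ᴴ * N i).trace.re) := by
          apply Finset.sum_congr rfl; intro i _
          rw [htr i]; simp
      _ = (D:ℝ) - S := by rw [Finset.sum_sub_distrib, hMtr]
  have hsqtr : ((0 - hpsd.sqrt)ᴴ * (0 - hpsd.sqrt)).trace.re = (D : ℝ) - S := by
    have : (0 - hpsd.sqrt)ᴴ * (0 - hpsd.sqrt) = 1 - ∑ i, (N i)ᴴ * N i := by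
      rw [zero_sub, Matrix.conjTranspose_neg, Matrix.neg_mul, Matrix.mul_neg, neg_neg, hsq]
    rw [this, Matrix.trace_sub, Matrix.trace_one, Matrix.trace_sum]
    simp [Complex.re_sum, hS]
  -- combine
  have hSle : (D:ℝ) - S ≤ (D:ℝ) * δ ^ 2 := by nlinarith [hnorm]
  have hbound : ∑ i, (Delta (M i) (N i)) ^ 2 + (Delta 0 hpsd.sqrt) ^ 2 ≤ δ ^ 2 := by
    have h1 : ∑ i, (Delta (M i) (N i)) ^ 2 ≤ (1 / (2 * D)) * ((D:ℝ) - S) := by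
      rw [← hsum1, Finset.mul_sum]
      exact Finset.sum_le_sum fun i _ => key (M i) (N i)
    have h2 : (Delta 0 hpsd.sqrt) ^ 2 ≤ (1 / (2 * D)) * ((D:ℝ) - S) := by
      rw [← hsqtr]; exact key 0 hpsd.sqrt
    have : (1 / (2 * D)) * ((D:ℝ) - S) + (1 / (2 * D)) * ((D:ℝ) - S) ≤ δ ^ 2 := by
      rw [← two_mul, ← mul_assoc]
      have e : 2 * (1 / (2 * (D:ℝ))) = 1 / D := by field_simp
      rw [e, div_mul_eq_mul_div, one_mul, div_le_iff₀ hDpos]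
      nlinarith [hSle]
    linarith
  have hnn : 0 ≤ ∑ i, (Delta (M i) (N i)) ^ 2 + (Delta 0 hpsd.sqrt) ^ 2 := by
    positivity
  calc Real.sqrt (∑ i, (Delta (M i) (N i)) ^ 2 + (Delta 0 hpsd.sqrt) ^ 2)
      ≤ Real.sqrt (δ ^ 2) := Real.sqrt_le_sqrt hbound
    _ = δ := by rw [Real.sqrt_sq hδ0.le]
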